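/- For S = (ℕ, max) and f ∈ ℓ^∞(S), if for all non-principal ultrafilters ω, υ on ℕ one has lim_{s→ω} lim_{t→υ} f(max(s,t)) = lim_{t→υ} lim_{s→ω} f(max(s,t)), then f is the sum of a function in c_0(ℕ) and a constant. -/
import Mathlib


open Filter

/-- Any ultrafilter limit of a bounded real sequence exists. -/
lemma exists_ultrafilter_lim (f : ℕ → ℝ) (C : ℝ) (hC : ∀ n, |f n| ≤ C)
    (u : Ultrafilter ℕ) : ∃ L, Tendsto f ↑u (nhds L) := by
  have hc : IsCompact (Set.Icc (-C) C) := isCompact_Icc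
  have hle : ↑(u.map f) ≤ Filter.principal (Set.Icc (-C) C) := by
    simp only [Ultrafilter.coe_map, Filter.le_principal_iff, Filter.mem_map]
    filter_upwards with n
    exact abs_le.mp (hC n)
  obtain ⟨a, _, ha⟩ := hc.ultrafilter_le_nhds (u.map f) hle
  exact ⟨a, ha⟩

/-- For `S = (ℕ, max)` and bounded `f : ℕ → ℝ`, if for all free (non-principal) ultrafilters
`ω, υ` on `ℕ` the iterated limits `lim_{s→ω} lim_{t→υ} f (max s t)` and
`lim_{t→υ} lim_{s→ω} f (max s t)` agree, then `f` is the sum of a function vanishing at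
infinity and a constant. -/
theorem wap_iterated_limits_imp_c0_plus_const (f : ℕ → ℝ) (hb : ∃ C, ∀ n, |f n| ≤ C)
    (h : ∀ (ω υ : Ultrafilter ℕ), (↑ω ≤ (cofinite : Filter ℕ)) → (↑υ ≤ (cofinite : Filter ℕ)) →
      ∀ (g k : ℕ → ℝ) (L M : ℝ),
        (∀ s, Tendsto (fun t => f (max s t)) ↑υ (nhds (g s))) → Tendsto g ↑ω (nhds L) →
        (∀ t, Tendsto (fun s => f (max s t)) ↑ω (nhds (k t))) → Tendsto k ↑υ (nhds M) →
        L = M) :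
    ∃ (g : ℕ → ℝ) (c : ℝ), Tendsto g cofinite (nhds 0) ∧ f = fun n => g n + c := by
  obtain ⟨C, hC⟩ := hb
  -- fixed free ultrafilter
  obtain ⟨ω₀, hω₀⟩ := Filter.exists_ultrafilter_le (f := (cofinite : Filter ℕ))
  obtain ⟨c, hc⟩ := exists_ultrafilter_lim f C hC ω₀
  -- key: for any free ultrafilter u with limit L, and fixed s, f (max s ·) → L along u
  have key : ∀ (u : Ultrafilter ℕ), ↑u ≤ (cofinite : Filter ℕ) → ∀ (L : ℝ),
      Tendsto f ↑u (nhds L) → ∀ s, Tendsto (fun t => f (max s t)) ↑u (nhds L) := by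
    intro u hu L hL s
    apply hL.congr'
    have : ∀ᶠ t in (cofinite : Filter ℕ), s ≤ t := by
      rw [Nat.cofinite_eq_atTop]; exact eventually_ge_atTop s
    filter_upwards [hu this] with t ht
    rw [max_eq_right ht]
  -- any free ultrafilter limit equals c
  have hall : ∀ (u : Ultrafilter ℕ), ↑u ≤ (cofinite : Filter ℕ) → Tendsto f ↑u (nhds c) := by
    intro u hu
    obtain ⟨L, hL⟩ := exists_ultrafilter_lim f C hC u
    have := h ω₀ u hω₀ hu (fun _ => L) (fun _ => c) L c
      (fun s => key u hu L hL s) tendsto_const_nhds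
      (fun t => (key ω₀ hω₀ c hc t).congr fun s => by rw [max_comm]) tendsto_const_nhds
    rwa [this] at hL
  have hf : Tendsto f cofinite (nhds c) := tendsto_iff_ultrafilter f cofinite (nhds c) |>.mpr hall
  refine ⟨fun n => f n - c, c, ?_, by funext n; ring⟩
  simpa using hf.sub (tendsto_const_nhds (x := c))
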